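/- arXiv:1307.2323 — 3 statements merged into one kernel-verified Lean document; each statement's English description precedes it below -/
import Mathlib

section
/- Let ρ and π be density matrices on ℂ^n with ρ ≠ π and with the range of π contained in the range of ρ. Then there exists p > 0 such that ρ + p·(ρ − π) is positive semidefinite, while ρ + q·(ρ − π) fails to be positive semidefinite for every q > p. -/
open Matrix
open scoped ComplexOrder

/-- A density matrix on ℂ^n: positive semidefinite with trace 1. -/
def IsDensityMatrix {n : ℕ} (ρ : Matrix (Fin n) (Fin n) ℂ) : Prop :=
  ρ.PosSemidef ∧ ρ.trace = 1

/-- The trace distance between two matrices whose difference is Hermitian: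
half the sum of the absolute values of the eigenvalues of the difference. -/
noncomputable def traceDist {n : ℕ} (ρ π : Matrix (Fin n) (Fin n) ℂ) : ℝ :=
  if h : (ρ - π).IsHermitian then (1 / 2) * ∑ i, |h.eigenvalues i| else 0

section Aux
variable {n : ℕ}

lemma herm_quad_real {M : Matrix (Fin n) (Fin n) ℂ} (hM : M.IsHermitian) (x : Fin n → ℂ) :
    (star x ⬝ᵥ M *ᵥ x).im = 0 := by
  have h : star (star x ⬝ᵥ M *ᵥ x) = star x ⬝ᵥ M *ᵥ x := by
    conv_lhs => rw [star_dotProduct, star_star, star_mulVec, hM.eq, ← dotProduct_mulVec]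
  have := congrArg Complex.im h
  simp [Complex.star_def] at this
  linarith

lemma psd_iff_re {M : Matrix (Fin n) (Fin n) ℂ} (hM : M.IsHermitian) :
    M.PosSemidef ↔ ∀ x, 0 ≤ (star x ⬝ᵥ M *ᵥ x).re := by
  constructor
  · intro h x
    exact (Complex.le_def.mp (h.dotProduct_mulVec_nonneg x)).1
  · intro h
    refine PosSemidef.of_dotProduct_mulVec_nonneg hM (fun x => ?_)
    rw [Complex.le_def]
    exact ⟨h x, (herm_quad_real hM x).symm⟩

lemma quad_add_smul (ρ A : Matrix (Fin n) (Fin n) ℂ) (p : ℝ) (x : Fin n → ℂ) :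
    (star x ⬝ᵥ (ρ + (p:ℂ) • A) *ᵥ x).re
      = (star x ⬝ᵥ ρ *ᵥ x).re + p * (star x ⬝ᵥ A *ᵥ x).re := by
  rw [add_mulVec, dotProduct_add, smul_mulVec, dotProduct_smul]
  simp [Complex.add_re, Complex.mul_re]

lemma psd_trace_zero {A : Matrix (Fin n) (Fin n) ℂ} (hA : A.PosSemidef)
    (h : A.trace = 0) : A = 0 := by
  have hH := hA.1
  have hev : ∀ i, hH.eigenvalues i = 0 := by
    have htr : A.trace = ∑ i, (hH.eigenvalues i : ℂ) := by
      conv_lhs => rw [hH.spectral_theorem]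
      rw [Unitary.conjStarAlgAut_apply, trace_mul_cycle]
      rw [(Matrix.mem_unitaryGroup_iff').mp (hH.eigenvectorUnitary).2, one_mul]
      simp [trace_diagonal]
    rw [htr] at h
    have : ∑ i, hH.eigenvalues i = 0 := by
      have := congrArg Complex.re h
      simpa using this
    intro i
    have := (Finset.sum_eq_zero_iff_of_nonneg (fun i _ => hA.eigenvalues_nonneg i)).mp this
    exact this i (Finset.mem_univ i)
  rw [hH.spectral_theorem]
  have : diagonal (RCLike.ofReal ∘ hH.eigenvalues) = (0 : Matrix (Fin n) (Fin n) ℂ) := by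
    ext i j
    by_cases hij : i = j <;> simp [diagonal, hij, hev]
  rw [this]
  simp

lemma star_dot_self_re (w : Fin n → ℂ) :
    (star w ⬝ᵥ w).re = ∑ i, Complex.normSq (w i) := by
  simp only [dotProduct, Pi.star_apply, Complex.star_def, Complex.re_sum]
  congr 1; ext i
  rw [Complex.normSq_apply, Complex.mul_re]
  simp

lemma quad_bound (M : Matrix (Fin n) (Fin n) ℂ) :
    ∀ v, (star (M *ᵥ v) ⬝ᵥ (M *ᵥ v)).re ≤ (∑ i, ∑ j, Complex.normSq (M i j)) * (star v ⬝ᵥ v).re := by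
  intro v
  rw [star_dot_self_re, star_dot_self_re]
  calc ∑ i, Complex.normSq ((M *ᵥ v) i)
      ≤ ∑ i, (∑ j, Complex.normSq (M i j)) * (∑ j, Complex.normSq (v j)) := by
        apply Finset.sum_le_sum
        intro i _
        have h1 : ‖(M *ᵥ v) i‖ ≤ ∑ j, ‖M i j‖ * ‖v j‖ := by
          simpa [mulVec, dotProduct, norm_mul] using norm_sum_le Finset.univ (fun j => M i j * v j)
        have h2 : (∑ j, ‖M i j‖ * ‖v j‖)^2
            ≤ (∑ j, ‖M i j‖^2) * (∑ j, ‖v j‖^2) :=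
          Finset.sum_mul_sq_le_sq_mul_sq _ _ _
        have h3 : Complex.normSq ((M *ᵥ v) i) = ‖(M *ᵥ v) i‖ ^ 2 :=
          (Complex.sq_norm _).symm
        rw [h3]
        calc ‖(M *ᵥ v) i‖ ^ 2
            ≤ (∑ j, ‖M i j‖ * ‖v j‖)^2 := by
              apply pow_le_pow_left₀ (norm_nonneg _) h1
          _ ≤ (∑ j, ‖M i j‖^2) * (∑ j, ‖v j‖^2) := h2
          _ = (∑ j, Complex.normSq (M i j)) * (∑ j, Complex.normSq (v j)) := by
              simp [Complex.sq_norm]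
    _ = (∑ i, ∑ j, Complex.normSq (M i j)) * ∑ j, Complex.normSq (v j) := by
        rw [← Finset.sum_mul]

lemma factor_exists (C B : Matrix (Fin n) (Fin n) ℂ)
    (hker : ∀ x, C *ᵥ x = 0 → B *ᵥ x = 0) :
    ∃ M : Matrix (Fin n) (Fin n) ℂ, B = M * C := by
  set f := C.mulVecLin
  set g := B.mulVecLin
  have hle : LinearMap.ker f ≤ LinearMap.ker g := by
    intro x hx
    simp only [LinearMap.mem_ker, Matrix.mulVecLin_apply] at *
    exact hker x hx
  set p := LinearMap.ker f
  set fbar := p.liftQ f le_rfl with hfbar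
  set gbar := p.liftQ g hle with hgbar
  have hinj : LinearMap.ker fbar = ⊥ := Submodule.ker_liftQ_eq_bot _ _ _ le_rfl
  obtain ⟨L, hL⟩ := fbar.exists_leftInverse_of_injective hinj
  set Mlin := gbar ∘ₗ L
  refine ⟨LinearMap.toMatrix' Mlin, ?_⟩
  have key : Mlin ∘ₗ f = g := by
    have hf : fbar ∘ₗ p.mkQ = f := Submodule.liftQ_mkQ _ _ _
    have hg : gbar ∘ₗ p.mkQ = g := Submodule.liftQ_mkQ _ _ _
    calc Mlin ∘ₗ f = gbar ∘ₗ (L ∘ₗ fbar) ∘ₗ p.mkQ := by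
          rw [← hf]; ext x; simp [Mlin]
      _ = gbar ∘ₗ p.mkQ := by rw [hL]; ext x; simp
      _ = g := hg
  have hml : (LinearMap.toMatrix' Mlin).mulVecLin = Mlin := by
    rw [← Matrix.toLin'_apply', Matrix.toLin'_toMatrix']
  have : (LinearMap.toMatrix' Mlin * C).mulVecLin = B.mulVecLin := by
    rw [Matrix.mulVecLin_mul, hml]; exact key
  have h2 := congrArg LinearMap.toMatrix' this
  rw [← Matrix.toLin'_apply', ← Matrix.toLin'_apply', LinearMap.toMatrix'_toLin',
    LinearMap.toMatrix'_toLin'] at h2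
  exact h2.symm

lemma sq_quad {B : Matrix (Fin n) (Fin n) ℂ} (hB : B.IsHermitian) (x : Fin n → ℂ) :
    star x ⬝ᵥ (B * B) *ᵥ x = star (B *ᵥ x) ⬝ᵥ (B *ᵥ x) := by
  rw [← mulVec_mulVec, dotProduct_mulVec, star_mulVec, hB.eq]

lemma exists_bound {ρ π : Matrix (Fin n) (Fin n) ℂ} (hρ : ρ.PosSemidef) (hπ : π.PosSemidef)
    (hker : ∀ x, ρ *ᵥ x = 0 → π *ᵥ x = 0) :
    ∃ c : ℝ, 0 ≤ c ∧ ∀ x, (star x ⬝ᵥ π *ᵥ x).re ≤ c * (star x ⬝ᵥ ρ *ᵥ x).re := by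
  set C := (open MatrixOrder in CFC.sqrt ρ) with hC
  set B := (open MatrixOrder in CFC.sqrt π) with hB
  have hCps : C.PosSemidef := by open MatrixOrder in exact nonneg_iff_posSemidef.mp (CFC.sqrt_nonneg ρ)
  have hBps : B.PosSemidef := by open MatrixOrder in exact nonneg_iff_posSemidef.mp (CFC.sqrt_nonneg π)
  have hCC : C * C = ρ := by open MatrixOrder in exact CFC.sqrt_mul_sqrt_self ρ (nonneg_iff_posSemidef.mpr hρ)
  have hBB : B * B = π := by open MatrixOrder in exact CFC.sqrt_mul_sqrt_self π (nonneg_iff_posSemidef.mpr hπ)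
  have hqρ : ∀ x, star x ⬝ᵥ ρ *ᵥ x = star (C *ᵥ x) ⬝ᵥ (C *ᵥ x) := fun x => by
    rw [← hCC, sq_quad hCps.1]
  have hqπ : ∀ x, star x ⬝ᵥ π *ᵥ x = star (B *ᵥ x) ⬝ᵥ (B *ᵥ x) := fun x => by
    rw [← hBB, sq_quad hBps.1]
  have hkerCB : ∀ x, C *ᵥ x = 0 → B *ᵥ x = 0 := by
    intro x hx
    have hρx : ρ *ᵥ x = 0 := by rw [← hCC, ← mulVec_mulVec, hx, mulVec_zero]
    have hπx : π *ᵥ x = 0 := hker x hρx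
    have : star (B *ᵥ x) ⬝ᵥ (B *ᵥ x) = 0 := by rw [← hqπ, hπx, dotProduct_zero]
    exact dotProduct_star_self_eq_zero.mp this
  obtain ⟨M, hM⟩ := factor_exists C B hkerCB
  refine ⟨∑ i, ∑ j, Complex.normSq (M i j), Finset.sum_nonneg fun i _ => Finset.sum_nonneg fun j _ => Complex.normSq_nonneg _, fun x => ?_⟩
  rw [hqρ, hqπ, hM, ← mulVec_mulVec]
  exact quad_bound M (C *ᵥ x)

end Aux

theorem stmt_6 {n : ℕ} (ρ π : Matrix (Fin n) (Fin n) ℂ)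
    (hρ : IsDensityMatrix ρ) (hπ : IsDensityMatrix π) (hne : ρ ≠ π)
    (hrange : LinearMap.range π.mulVecLin ≤ LinearMap.range ρ.mulVecLin) :
    ∃ p : ℝ, 0 < p ∧ (ρ + ((p : ℝ) : ℂ) • (ρ - π)).PosSemidef ∧
      ∀ q : ℝ, p < q → ¬ (ρ + ((q : ℝ) : ℂ) • (ρ - π)).PosSemidef := by
  obtain ⟨hρp, hρt⟩ := hρ
  obtain ⟨hπp, hπt⟩ := hπ
  set A := ρ - π with hAdef
  have hAh : A.IsHermitian := hρp.1.sub hπp.1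
  set r : (Fin n → ℂ) → ℝ := fun x => (star x ⬝ᵥ ρ *ᵥ x).re with hrdef
  set s : (Fin n → ℂ) → ℝ := fun x => (star x ⬝ᵥ A *ᵥ x).re with hsdef
  have hr : ∀ x, 0 ≤ r x := fun x => (Complex.le_def.mp (hρp.dotProduct_mulVec_nonneg x)).1
  have hherm : ∀ p : ℝ, (ρ + (p:ℂ) • A).IsHermitian := by
    intro p
    have h1 : ((p:ℂ) • A).IsHermitian := by
      have h2 : star (p:ℂ) = (p:ℂ) := Complex.conj_ofReal p
      simp [Matrix.IsHermitian, conjTranspose_smul, hAh.eq, h2]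
    exact hρp.1.add h1
  have hpsd : ∀ p : ℝ, (ρ + (p:ℂ) • A).PosSemidef ↔ ∀ x, 0 ≤ r x + p * s x := by
    intro p
    rw [psd_iff_re (hherm p)]
    constructor
    · intro h x; have := h x; rwa [quad_add_smul] at this
    · intro h x; rw [quad_add_smul]; exact h x
  -- the feasible set
  set S : Set ℝ := {p : ℝ | 0 ≤ p ∧ ∀ x, 0 ≤ r x + p * s x} with hSdef
  -- Claim 3: some positive ε ∈ S, via range condition
  have hker : ∀ x, ρ *ᵥ x = 0 → π *ᵥ x = 0 := by
    intro x hx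
    have hmem : π *ᵥ x ∈ LinearMap.range ρ.mulVecLin := hrange ⟨x, rfl⟩
    obtain ⟨y, hy⟩ := hmem
    have hz : star x ⬝ᵥ π *ᵥ x = 0 := by
      have h1 : star x ᵥ* ρ = 0 := by
        have := congrArg star hx
        rw [star_mulVec, hρp.1.eq] at this
        simpa using this
      rw [← hy]
      simp only [Matrix.mulVecLin_apply]
      rw [dotProduct_mulVec, h1, zero_dotProduct]
    exact (hπp.dotProduct_mulVec_zero_iff x).mp hz
  obtain ⟨c, hc0, hcb⟩ := exists_bound hρp hπp hker
  set c' : ℝ := max c 1 with hc'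
  have hc'1 : 1 ≤ c' := le_max_right _ _
  have hc'pos : 0 < c' := lt_of_lt_of_le one_pos hc'1
  have hbπρ : ∀ x, (star x ⬝ᵥ π *ᵥ x).re ≤ c' * r x := fun x =>
    (hcb x).trans (mul_le_mul_of_nonneg_right (le_max_left _ _) (hr x))
  have hsx : ∀ x, s x = r x - (star x ⬝ᵥ π *ᵥ x).re := by
    intro x
    simp only [hsdef, hrdef, hAdef, sub_mulVec, dotProduct_sub, Complex.sub_re]
  have hεS : (1 / c') ∈ S := by
    refine ⟨by positivity, fun x => ?_⟩
    rw [hsx, mul_sub]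
    have h1 : (1/c') * (star x ⬝ᵥ π *ᵥ x).re ≤ (1/c') * (c' * r x) :=
      mul_le_mul_of_nonneg_left (hbπρ x) (by positivity)
    have h2 : (1/c') * (c' * r x) = r x := by field_simp
    have h3 : 0 ≤ (1/c') * r x := mul_nonneg (by positivity) (hr x)
    linarith
  -- boundedness
  have hbdd : ∃ q0 : ℝ, ∀ p ∈ S, p ≤ q0 := by
    by_contra hno
    push_neg at hno
    -- then every q ≥ 0 is in S? no: derive s x ≥ 0 for all x
    have hs0 : ∀ x, 0 ≤ s x := by
      intro x
      by_contra hneg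
      push_neg at hneg
      obtain ⟨p, hpS, hplt⟩ := hno ((r x + 1) / (-s x))
      have := hpS.2 x
      have hineq : p * s x < ((r x + 1) / (-s x)) * s x := by
        exact (mul_lt_mul_of_neg_right hplt hneg)
      have : r x + p * s x < r x + ((r x + 1) / (-s x)) * s x := by linarith
      have heval : r x + ((r x + 1) / (-s x)) * s x = -1 := by
        have hne0 : s x ≠ 0 := ne_of_lt hneg
        have h4 : ((r x + 1) / (-s x)) * s x = -(r x + 1) := by
          rw [div_mul_eq_mul_div, div_neg, mul_div_assoc, div_self hne0]
          ring
        rw [h4]; ring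
      have := hpS.2 x
      linarith
    -- A PSD
    have hApsd : A.PosSemidef := by
      rw [psd_iff_re hAh]; exact hs0
    have htr : A.trace = 0 := by rw [hAdef, trace_sub, hρt, hπt]; ring
    have hA0 := psd_trace_zero hApsd htr
    rw [hAdef, sub_eq_zero] at hA0
    exact hne hA0
  obtain ⟨q0, hq0⟩ := hbdd
  have hSne : S.Nonempty := ⟨1 / c', hεS⟩
  have hSbdd : BddAbove S := ⟨q0, fun p hp => hq0 p hp⟩
  set P := sSup S with hP
  have hPpos : 0 < P := lt_of_lt_of_le (by positivity) (le_csSup hSbdd hεS)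
  have hPnonneg : 0 ≤ P := le_of_lt hPpos
  refine ⟨P, hPpos, ?_, ?_⟩
  · rw [hpsd]
    intro x
    rcases le_or_gt 0 (s x) with hs | hs
    · have : 0 ≤ P * s x := mul_nonneg hPnonneg hs
      linarith [hr x]
    · have hub : P ≤ r x / (-s x) := by
        apply csSup_le hSne
        intro p hp
        have h1 := hp.2 x
        rw [le_div_iff₀ (by linarith)]
        linarith [hp.2 x]
      have hpos : 0 < -s x := by linarith
      have h2 : P * (-s x) ≤ (r x / (-s x)) * (-s x) :=
        mul_le_mul_of_nonneg_right hub hpos.le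
      have h3 : (r x / (-s x)) * (-s x) = r x := div_mul_cancel₀ _ (ne_of_gt hpos)
      linarith
  · intro q hq hqpsd
    have hqS : q ∈ S := ⟨le_of_lt (lt_trans hPpos hq), (hpsd q).mp hqpsd⟩
    have := le_csSup hSbdd hqS
    rw [← hP] at this
    linarith
end

section
/- Let P be a homogeneous multivariate polynomial of degree D ≥ 1 in n complex variables, and let ρ be a density matrix on ℂ^n with rank ρ ≥ 2 (a mixed state). Then the zero-E equivalency of ρ is nonzero: there exist λ > 0, a density matrix ρ_L belonging to Z (the set of finite convex combinations of pure states annihilating P), and a density matrix ω, such that ρ = λ·ρ_L + (1−λ)·ω. -/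
open Matrix
open scoped ComplexOrder

/-- The set of density matrices expressible as a finite convex combination of rank-one
projections onto unit vectors annihilating `P`. -/
def ZeroSet {n : ℕ} (P : MvPolynomial (Fin n) ℂ) : Set (Matrix (Fin n) (Fin n) ℂ) :=
  { σ | ∃ (m : ℕ) (q : Fin m → ℝ) (v : Fin m → Fin n → ℂ),
      (∀ j, 0 ≤ q j) ∧ (∑ j, q j) = 1 ∧ (∀ j, star (v j) ⬝ᵥ v j = 1) ∧
      (∀ j, MvPolynomial.eval (v j) P = 0) ∧
      σ = ∑ j, ((q j : ℝ) : ℂ) • Matrix.vecMulVec (v j) (star (v j)) }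

section Aux

open Polynomial

lemma eval_smul_homog {n D : ℕ} {P : MvPolynomial (Fin n) ℂ} (hP : P.IsHomogeneous D)
    (c : ℂ) (x : Fin n → ℂ) :
    MvPolynomial.eval (c • x) P = c ^ D * MvPolynomial.eval x P := by
  rw [MvPolynomial.eval_eq, MvPolynomial.eval_eq, Finset.mul_sum]
  refine Finset.sum_congr rfl fun d hd => ?_
  have hdeg : d.degree = D := by
    by_contra h
    exact MvPolynomial.mem_support_iff.mp hd (hP.coeff_eq_zero h)
  simp only [Pi.smul_apply, smul_eq_mul, mul_pow, Finset.prod_mul_distrib,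
    Finset.prod_pow_eq_pow_sum]
  rw [← hdeg]
  change _ = c ^ (∑ i ∈ d.support, d i) * _
  ring

lemma exists_zero_pair {n D : ℕ} (hD : 1 ≤ D) {P : MvPolynomial (Fin n) ℂ}
    (hP : P.IsHomogeneous D) (w₁ w₂ : Fin n → ℂ) :
    ∃ α β : ℂ, Complex.normSq α + Complex.normSq β = 1 ∧
      MvPolynomial.eval (α • w₁ + β • w₂) P = 0 := by
  have key : ∀ (a b : Fin n → ℂ) (t : ℂ),
      (MvPolynomial.eval₂ Polynomial.C (fun i => C (a i) + X * C (b i)) P).eval t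
        = MvPolynomial.eval (fun i => a i + t * b i) P := by
    intro a b t
    have h1 := MvPolynomial.eval₂_comp_left (Polynomial.evalRingHom t) Polynomial.C
      (fun i => C (a i) + X * C (b i)) P
    simp only [coe_evalRingHom] at h1
    rw [h1]
    have h2 : (Polynomial.evalRingHom t).comp Polynomial.C = RingHom.id ℂ := by
      ext a; simp
    rw [h2, MvPolynomial.eval₂_id]
    have h3 : (Polynomial.eval t ∘ fun i => C (a i) + X * C (b i)) = fun i => a i + t * b i := by
      funext i; simp; ring
    rw [h3]
  set q := MvPolynomial.eval₂ Polynomial.C (fun i => C (w₁ i) + X * C (w₂ i)) P with hqdef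
  by_cases hdeg : q.degree ≤ 0
  · -- constant case: show P w₂ = 0
    set c := q.coeff 0 with hc
    have hqC : q = C c := Polynomial.eq_C_of_degree_le_zero hdeg
    have hconst : ∀ t : ℂ, MvPolynomial.eval (fun i => w₁ i + t * w₂ i) P = c := by
      intro t
      rw [← key w₁ w₂ t, ← hqdef, hqC, eval_C]
    set r := MvPolynomial.eval₂ Polynomial.C (fun i => C (w₂ i) + X * C (w₁ i)) P with hrdef
    have hr0 : r - C c * X ^ D = 0 := by
      apply Polynomial.eq_zero_of_infinite_isRoot
      apply Set.Infinite.mono (s := ({0}ᶜ : Set ℂ))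
      · intro s hs
        have hs0 : (s : ℂ) ≠ 0 := hs
        have hfun : (fun i => w₂ i + s * w₁ i) = s • (fun i => w₁ i + s⁻¹ * w₂ i) := by
          funext i
          simp only [Pi.smul_apply, smul_eq_mul]
          field_simp
          ring
        have : r.eval s = s ^ D * c := by
          rw [hrdef, key w₂ w₁ s, hfun, eval_smul_homog hP, hconst]
        simp [Polynomial.IsRoot, this]
        ring
      · exact Set.Finite.infinite_compl (Set.finite_singleton 0)
    have hw2 : MvPolynomial.eval w₂ P = 0 := by
      have h0 : r.eval 0 = MvPolynomial.eval w₂ P := by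
        rw [hrdef, key w₂ w₁ 0]
        simp only [zero_mul, add_zero]
      have hr : r = C c * X ^ D := by
        have := sub_eq_zero.mp hr0
        exact this
      rw [← h0, hr]
      simp [zero_pow (by omega : D ≠ 0)]
    refine ⟨0, 1, by simp, ?_⟩
    simpa using hw2
  · -- root case
    obtain ⟨t₀, ht₀⟩ := Complex.isAlgClosed.exists_root q (fun h => hdeg (le_of_eq h))
    have hroot : MvPolynomial.eval (fun i => w₁ i + t₀ * w₂ i) P = 0 := by
      rw [← key w₁ w₂ t₀]; exact ht₀
    set N : ℝ := Real.sqrt (1 + Complex.normSq t₀) with hN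
    have hNpos : 0 < N := Real.sqrt_pos.mpr (by nlinarith [Complex.normSq_nonneg t₀])
    have hNsq : N ^ 2 = 1 + Complex.normSq t₀ := Real.sq_sqrt (by nlinarith [Complex.normSq_nonneg t₀])
    refine ⟨((N⁻¹ : ℝ) : ℂ), ((N⁻¹ : ℝ) : ℂ) * t₀, ?_, ?_⟩
    · have : Complex.normSq ((N⁻¹ : ℝ) : ℂ) = (N⁻¹)^2 := by
        simp [Complex.normSq_ofReal]; ring
      rw [Complex.normSq_mul, this]
      field_simp
      linarith [hNsq]
    · have hfun : ((N⁻¹ : ℝ) : ℂ) • w₁ + (((N⁻¹ : ℝ) : ℂ) * t₀) • w₂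
          = ((N⁻¹ : ℝ) : ℂ) • (fun i => w₁ i + t₀ * w₂ i) := by
        funext i
        simp only [Pi.add_apply, Pi.smul_apply, smul_eq_mul]
        ring
      rw [hfun, eval_smul_homog hP, hroot, mul_zero]

end Aux

theorem stmt_11 {n : ℕ} (P : MvPolynomial (Fin n) ℂ) (D : ℕ) (hD : 1 ≤ D)
    (hP : P.IsHomogeneous D) (ρ : Matrix (Fin n) (Fin n) ℂ)
    (hρ : IsDensityMatrix ρ) (hrank : 2 ≤ ρ.rank) :
    ∃ lam : ℝ, 0 < lam ∧
      ∃ ρL ∈ ZeroSet P, ∃ ω : Matrix (Fin n) (Fin n) ℂ, IsDensityMatrix ω ∧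
        ρ = ((lam : ℝ) : ℂ) • ρL + ((1 - lam : ℝ) : ℂ) • ω := by
  obtain ⟨hpsd, htr⟩ := hρ
  have hH : ρ.IsHermitian := hpsd.1
  set U : Matrix (Fin n) (Fin n) ℂ := (Matrix.IsHermitian.eigenvectorUnitary hH : Matrix (Fin n) (Fin n) ℂ) with hU
  set μ : Fin n → ℝ := hH.eigenvalues with hμ
  have hspec : ρ = U * Matrix.diagonal (fun i => (μ i : ℂ)) * star U := by
    exact hH.spectral_theorem
  have hUU : star U * U = 1 := Unitary.coe_star_mul_self _
  have hcard : 1 < Fintype.card {i // μ i ≠ 0} := by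
    rw [hH.rank_eq_card_non_zero_eigs, ← hμ] at hrank; omega
  obtain ⟨⟨a, ha⟩, ⟨b, hb⟩, hab'⟩ := Fintype.exists_pair_of_one_lt_card hcard
  have hab : a ≠ b := fun h => hab' (Subtype.ext h)
  have hμa : 0 < μ a := (hpsd.eigenvalues_nonneg a).lt_of_ne (Ne.symm ha)
  have hμb : 0 < μ b := (hpsd.eigenvalues_nonneg b).lt_of_ne (Ne.symm hb)
  have horth : ∀ c d : Fin n, star (fun i => U i c) ⬝ᵥ (fun i => U i d) = if c = d then 1 else 0 := by
    intro c d
    have h1 : (star U * U) c d = (1 : Matrix (Fin n) (Fin n) ℂ) c d := by rw [hUU]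
    simpa [Matrix.mul_apply, Matrix.one_apply, dotProduct, Matrix.star_apply] using h1
  -- the zero vector
  have hzp : ∃ α β : ℂ, Complex.normSq α + Complex.normSq β = 1 ∧
      MvPolynomial.eval (α • (fun i => U i a) + β • (fun i => U i b)) P = 0 :=
    exists_zero_pair hD hP _ _
  obtain ⟨α, β, hαβ, hPv⟩ := hzp
  set v : Fin n → ℂ := α • (fun i => U i a) + β • (fun i => U i b) with hv
  have hsv : ∀ x : Fin n → ℂ, star v ⬝ᵥ x
      = (starRingEnd ℂ) α * ((star U *ᵥ x) a) + (starRingEnd ℂ) β * ((star U *ᵥ x) b) := by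
    intro x
    simp only [hv, dotProduct, Matrix.mulVec, dotProduct, Matrix.star_apply, Pi.star_apply,
      Pi.add_apply, Pi.smul_apply, smul_eq_mul, star_add, star_mul', Finset.mul_sum,
      RingHom.coe_coe]
    rw [← Finset.sum_add_distrib]
    refine Finset.sum_congr rfl fun i _ => ?_
    simp only [starRingEnd_apply]
    ring
  have hyv : ∀ c : Fin n, (star U *ᵥ v) c
      = α * (if c = a then 1 else 0) + β * (if c = b then 1 else 0) := by
    intro c
    have h1 : (star U *ᵥ v) c = star (fun i => U i c) ⬝ᵥ v := by
      simp [Matrix.mulVec, dotProduct, Matrix.star_apply, Pi.star_apply]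
    rw [h1, hv, dotProduct_add, dotProduct_smul, dotProduct_smul, horth, horth]
    simp [smul_eq_mul]
  have hunit : star v ⬝ᵥ v = 1 := by
    rw [hsv v, hyv a, hyv b]
    simp [hab, Ne.symm hab]
    have h1 : (starRingEnd ℂ) α * α = (Complex.normSq α : ℂ) := by
      rw [mul_comm, Complex.mul_conj]
    have h2 : (starRingEnd ℂ) β * β = (Complex.normSq β : ℂ) := by
      rw [mul_comm, Complex.mul_conj]
    rw [h1, h2, ← Complex.ofReal_add, hαβ, Complex.ofReal_one]
  have hquad : ∀ x : Fin n → ℂ, star x ⬝ᵥ (ρ *ᵥ x)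
      = ∑ i, ((μ i : ℂ)) * ((starRingEnd ℂ) ((star U *ᵥ x) i) * ((star U *ᵥ x) i)) := by
    intro x
    conv_lhs => rw [hspec]
    rw [← Matrix.mulVec_mulVec, ← Matrix.mulVec_mulVec, Matrix.dotProduct_mulVec]
    have h1 : star x ᵥ* U = star (star U *ᵥ x) := by
      rw [Matrix.star_mulVec, Matrix.star_eq_conjTranspose, Matrix.conjTranspose_conjTranspose]
    rw [h1]
    simp only [dotProduct, Matrix.mulVec_diagonal, Pi.star_apply, RingHom.coe_coe]
    refine Finset.sum_congr rfl fun i _ => ?_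
    simp only [starRingEnd_apply]
    ring
  set lam : ℝ := min (min (μ a) (μ b)) 2⁻¹ with hlam
  have hlam0 : 0 < lam := lt_min (lt_min hμa hμb) (by norm_num)
  have hlam_half : lam ≤ 2⁻¹ := min_le_right _ _
  have hlam1 : lam < 1 := lt_of_le_of_lt hlam_half (by norm_num)
  set M : Matrix (Fin n) (Fin n) ℂ := Matrix.vecMulVec v (star v) with hM
  have hMherm : M.IsHermitian := by
    ext i j
    simp [hM, Matrix.conjTranspose_apply, Matrix.vecMulVec_apply, mul_comm]
  have hconj : ∀ x : Fin n → ℂ, star x ⬝ᵥ v = (starRingEnd ℂ) (star v ⬝ᵥ x) := by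
    intro x
    simp only [dotProduct, map_sum, starRingEnd_apply, Pi.star_apply]
    refine Finset.sum_congr rfl fun i _ => ?_
    simp only [star_mul', star_star]
    ring
  have hMquad : ∀ x : Fin n → ℂ, star x ⬝ᵥ (M *ᵥ x) = (starRingEnd ℂ) (star v ⬝ᵥ x) * (star v ⬝ᵥ x) := by
    intro x
    have h1 : star x ⬝ᵥ (M *ᵥ x) = (star x ⬝ᵥ v) * (star v ⬝ᵥ x) := by
      simp only [hM, Matrix.mulVec, dotProduct, Matrix.vecMulVec_apply, Pi.star_apply,
        Finset.sum_mul, Finset.mul_sum]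
      rw [Finset.sum_comm]
      refine Finset.sum_congr rfl fun i _ => Finset.sum_congr rfl fun j _ => ?_
      ring
    rw [h1, hconj]
  have key : (ρ - ((lam : ℝ) : ℂ) • M).PosSemidef := by
    rw [Matrix.posSemidef_iff_dotProduct_mulVec]
    constructor
    · refine hH.sub ?_
      rw [Matrix.IsHermitian, Matrix.conjTranspose_smul, hMherm.eq]
      congr 1
      simp [Complex.star_def, Complex.conj_ofReal]
    · intro x
      have e1 : star x ⬝ᵥ ((ρ - ((lam : ℝ) : ℂ) • M) *ᵥ x)
          = star x ⬝ᵥ (ρ *ᵥ x) - ((lam : ℝ) : ℂ) * (star x ⬝ᵥ (M *ᵥ x)) := by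
        rw [Matrix.sub_mulVec, dotProduct_sub, Matrix.smul_mulVec, dotProduct_smul,
          smul_eq_mul]
      rw [e1, hquad x, hMquad x]
      set y : Fin n → ℂ := star U *ᵥ x with hy
      set s : ℂ := star v ⬝ᵥ x with hs
      have e2 : ∀ i : Fin n, (starRingEnd ℂ) (y i) * y i = (Complex.normSq (y i) : ℂ) :=
        fun i => by rw [mul_comm, Complex.mul_conj]
      have e3 : (starRingEnd ℂ) s * s = (Complex.normSq s : ℂ) := by rw [mul_comm, Complex.mul_conj]
      simp only [e2, e3]
      have e4 : (∑ i, ((μ i : ℂ)) * (Complex.normSq (y i) : ℂ))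
            - ((lam : ℝ) : ℂ) * (Complex.normSq s : ℂ)
          = (((∑ i, μ i * Complex.normSq (y i)) - lam * Complex.normSq s : ℝ) : ℂ) := by
        push_cast
        ring
      rw [e4, Complex.zero_le_real]
      have hsy : s = (starRingEnd ℂ) α * y a + (starRingEnd ℂ) β * y b := hsv x
      have habs : ‖s‖ ≤ ‖α‖ * ‖y a‖
          + ‖β‖ * ‖y b‖ := by
        rw [hsy]
        refine le_trans (norm_add_le _ _) ?_
        simp [norm_mul, Complex.norm_conj]
      have hnsq : Complex.normSq s ≤ Complex.normSq (y a) + Complex.normSq (y b) := by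
        rw [← Complex.sq_norm, ← Complex.sq_norm (y a), ← Complex.sq_norm (y b)]
        have hαβ' : ‖α‖ ^ 2 + ‖β‖ ^ 2 = 1 := by
          rw [Complex.sq_norm, Complex.sq_norm]; exact hαβ
        nlinarith [norm_nonneg s, norm_nonneg α, norm_nonneg β,
          norm_nonneg (y a), norm_nonneg (y b),
          sq_nonneg (‖α‖ * ‖y b‖ - ‖β‖ * ‖y a‖), habs]
      have hsum : μ a * Complex.normSq (y a) + μ b * Complex.normSq (y b)
          ≤ ∑ i, μ i * Complex.normSq (y i) := by
        rw [← Finset.sum_pair (f := fun i => μ i * Complex.normSq (y i)) hab]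
        refine Finset.sum_le_sum_of_subset_of_nonneg (Finset.subset_univ _) fun i _ _ => ?_
        exact mul_nonneg (hpsd.eigenvalues_nonneg i) (Complex.normSq_nonneg _)
      have hlama : lam ≤ μ a := le_trans (min_le_left _ _) (min_le_left _ _)
      have hlamb : lam ≤ μ b := le_trans (min_le_left _ _) (min_le_right _ _)
      nlinarith [Complex.normSq_nonneg (y a), Complex.normSq_nonneg (y b),
        Complex.normSq_nonneg s, hnsq, hsum, hlam0]
  have hMem : ∃ (m : ℕ) (q : Fin m → ℝ) (w : Fin m → Fin n → ℂ),
      (∀ j, 0 ≤ q j) ∧ (∑ j, q j) = 1 ∧ (∀ j, star (w j) ⬝ᵥ w j = 1) ∧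
      (∀ j, MvPolynomial.eval (w j) P = 0) ∧
      M = ∑ j, ((q j : ℝ) : ℂ) • Matrix.vecMulVec (w j) (star (w j)) := by
    refine ⟨1, fun _ => 1, fun _ => v, fun j => zero_le_one, by simp, fun j => hunit,
      fun j => hPv, by simp [hM]⟩
  have htrM : M.trace = 1 := by
    rw [← hunit]
    simp [hM, Matrix.trace, Matrix.diag, Matrix.vecMulVec_apply, dotProduct, mul_comm]
  have htrσ : (ρ - ((lam : ℝ) : ℂ) • M).trace = ((1 - lam : ℝ) : ℂ) := by
    rw [Matrix.trace_sub, Matrix.trace_smul, htrM, htr, smul_eq_mul, mul_one]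
    push_cast
    ring
  have h1lam : (0 : ℝ) < 1 - lam := by linarith
  set c1 : ℝ := (1 - lam)⁻¹ with hc1
  set σ : Matrix (Fin n) (Fin n) ℂ := ρ - ((lam : ℝ) : ℂ) • M with hσ
  set ω : Matrix (Fin n) (Fin n) ℂ := ((c1 : ℝ) : ℂ) • σ with hω
  have hωpsd : ω.PosSemidef := by
    rw [Matrix.posSemidef_iff_dotProduct_mulVec]
    constructor
    · rw [Matrix.IsHermitian, hω, Matrix.conjTranspose_smul, key.1.eq]
      congr 1
      simp [Complex.star_def, Complex.conj_ofReal]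
    · intro x
      rw [hω, Matrix.smul_mulVec, dotProduct_smul, smul_eq_mul]
      exact mul_nonneg (Complex.zero_le_real.mpr (by positivity)) (key.dotProduct_mulVec_nonneg x)
  have hωtr : ω.trace = 1 := by
    rw [hω, Matrix.trace_smul, hσ, htrσ, smul_eq_mul, ← Complex.ofReal_mul,
      inv_mul_cancel₀ h1lam.ne', Complex.ofReal_one]
  have heq : ρ = ((lam : ℝ) : ℂ) • M + ((1 - lam : ℝ) : ℂ) • ω := by
    rw [hω, smul_smul, ← Complex.ofReal_mul, mul_inv_cancel₀ h1lam.ne', Complex.ofReal_one,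
      one_smul, hσ]
    abel
  exact ⟨lam, hlam0, M, hMem, ω, ⟨hωpsd, hωtr⟩, heq⟩
end

section
/- Let P be a homogeneous multivariate polynomial of degree D ≥ 1 in n complex variables, and let ρ be a density matrix on ℂ^n. Suppose ρ = μ·ρ_L + (1−μ)·ω is an optimal zero-E decomposition: ρ_L ∈ Z, ω is a density matrix, 0 ≤ μ < 1, and for every decomposition ρ = λ·ρ_L' + (1−λ)·ω' with ρ_L' ∈ Z and ω' a density matrix one has λ ≤ μ. Then ω is a pure state, i.e., rank ω = 1. -/
open Matrix
open scoped ComplexOrder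

section Aux

lemma homog_eval_smul {n D : ℕ} {P : MvPolynomial (Fin n) ℂ} (hP : P.IsHomogeneous D)
    (c : ℂ) (x : Fin n → ℂ) :
    MvPolynomial.eval (fun k => c * x k) P = c ^ D * MvPolynomial.eval x P := by
  rw [MvPolynomial.eval_eq, MvPolynomial.eval_eq, Finset.mul_sum]
  refine Finset.sum_congr rfl fun d hd => ?_
  rw [MvPolynomial.mem_support_iff] at hd
  have hdeg : ∑ i ∈ d.support, d i = D := by
    have := hP hd
    simpa [Finsupp.weight_apply, Finsupp.sum] using this
  calc MvPolynomial.coeff d P * ∏ i ∈ d.support, (c * x i) ^ d i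
      = MvPolynomial.coeff d P * ((∏ i ∈ d.support, c ^ d i) * ∏ i ∈ d.support, x i ^ d i) := by
        rw [← Finset.prod_mul_distrib]; simp [mul_pow]
    _ = c ^ D * (MvPolynomial.coeff d P * ∏ i ∈ d.support, x i ^ d i) := by
        rw [Finset.prod_pow_eq_pow_sum]
        rw [hdeg]; ring

lemma eval_linePoly {n : ℕ} (P : MvPolynomial (Fin n) ℂ) (u w : Fin n → ℂ) (t : ℂ) :
    Polynomial.eval t (MvPolynomial.eval₂ Polynomial.C
      (fun k => Polynomial.C (u k) * Polynomial.X + Polynomial.C (w k)) P)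
    = MvPolynomial.eval (fun k => t * u k + w k) P := by
  have h := MvPolynomial.eval₂_comp_left (Polynomial.evalRingHom t) Polynomial.C
    (fun k => Polynomial.C (u k) * Polynomial.X + Polynomial.C (w k)) P
  simp only [Polynomial.coe_evalRingHom] at h
  rw [h]
  rw [show (Polynomial.evalRingHom t).comp Polynomial.C = RingHom.id ℂ from by ext z; simp]
  rw [MvPolynomial.eval₂_id]
  have : (Polynomial.eval t ∘ fun k => Polynomial.C (u k) * Polynomial.X + Polynomial.C (w k))
      = fun k => t * u k + w k := by
    funext k
    simp only [Function.comp_apply, Polynomial.eval_add, Polynomial.eval_mul, Polynomial.eval_C,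
      Polynomial.eval_X]
    ring
  rw [this]

lemma exists_zero_combo {n D : ℕ} {P : MvPolynomial (Fin n) ℂ} (hD : 1 ≤ D)
    (hP : P.IsHomogeneous D) (u w : Fin n → ℂ) :
    ∃ a b : ℂ, ¬(a = 0 ∧ b = 0) ∧ MvPolynomial.eval (fun k => a * u k + b * w k) P = 0 := by
  by_cases hu : MvPolynomial.eval u P = 0
  · refine ⟨1, 0, by simp, ?_⟩
    simpa using hu
  by_cases hw : MvPolynomial.eval w P = 0
  · refine ⟨0, 1, by simp, ?_⟩
    simpa using hw
  set p1 : Polynomial ℂ := MvPolynomial.eval₂ Polynomial.C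
    (fun k => Polynomial.C (u k) * Polynomial.X + Polynomial.C (w k)) P with hp1
  set p2 : Polynomial ℂ := MvPolynomial.eval₂ Polynomial.C
    (fun k => Polynomial.C (w k) * Polynomial.X + Polynomial.C (u k)) P with hp2
  have hev1 : ∀ t : ℂ, p1.eval t = MvPolynomial.eval (fun k => t * u k + w k) P :=
    fun t => eval_linePoly P u w t
  have hev2 : ∀ t : ℂ, p2.eval t = MvPolynomial.eval (fun k => t * w k + u k) P :=
    fun t => eval_linePoly P w u t
  have hdeg : 0 < p1.degree := by
    by_contra hcon
    push_neg at hcon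
    have hc : p1 = Polynomial.C (p1.coeff 0) := Polynomial.eq_C_of_degree_le_zero hcon
    have hc0 : p1.coeff 0 = MvPolynomial.eval w P := by
      have := hev1 0
      rw [hc] at this
      simpa using this
    have hscale : ∀ ε : ℂ, ε ≠ 0 → p2.eval ε = ε ^ D * MvPolynomial.eval w P := by
      intro ε hε
      rw [hev2]
      have harg : (fun k => ε * w k + u k) = fun k => ε * (ε⁻¹ * u k + w k) := by
        funext k; field_simp; ring
      rw [harg, homog_eval_smul hP ε (fun k => ε⁻¹ * u k + w k)]
      congr 1
      rw [← hev1 ε⁻¹, hc, hc0]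
      simp
    have hpoly : p2 - Polynomial.C (MvPolynomial.eval w P) * Polynomial.X ^ D = 0 := by
      apply Polynomial.eq_zero_of_infinite_isRoot
      apply Set.Infinite.mono (s := {x : ℂ | x ≠ 0})
      · intro ε hε
        simp only [Set.mem_setOf_eq, Polynomial.IsRoot, Polynomial.eval_sub, Polynomial.eval_mul,
          Polynomial.eval_C, Polynomial.eval_pow, Polynomial.eval_X]
        rw [hscale ε hε]; ring
      · have : ({x : ℂ | x ≠ 0}) = ({0} : Set ℂ)ᶜ := by ext z; simp
        rw [this]
        exact (Set.finite_singleton 0).infinite_compl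
    have h0 : p2.eval 0 = 0 := by
      have := congrArg (Polynomial.eval 0) hpoly
      simp only [Polynomial.eval_sub, Polynomial.eval_mul, Polynomial.eval_C, Polynomial.eval_pow,
        Polynomial.eval_X, Polynomial.eval_zero] at this
      rw [zero_pow (by omega : D ≠ 0)] at this
      linear_combination this
    rw [hev2 0] at h0
    apply hu
    simpa using h0
  obtain ⟨t₀, ht₀⟩ := Complex.exists_root hdeg
  refine ⟨t₀, 1, by simp, ?_⟩
  have := ht₀
  rw [Polynomial.IsRoot, hev1] at this
  simpa using this

lemma zeroSet_combo {n : ℕ} {P : MvPolynomial (Fin n) ℂ} {ρL : Matrix (Fin n) (Fin n) ℂ}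
    (hρL : ρL ∈ ZeroSet P) {v : Fin n → ℂ} (hv : star v ⬝ᵥ v = 1)
    (hPv : MvPolynomial.eval v P = 0) {a b : ℝ} (ha : 0 ≤ a) (hb : 0 ≤ b) (hab : a + b = 1) :
    ((a : ℝ) : ℂ) • ρL + ((b : ℝ) : ℂ) • Matrix.vecMulVec v (star v) ∈ ZeroSet P := by
  obtain ⟨m, q, vs, hq0, hq1, hvs1, hvs0, hsum⟩ := hρL
  refine ⟨m + 1, Fin.cons b (fun j => a * q j), Fin.cons v vs, ?_, ?_, ?_, ?_, ?_⟩
  · intro j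
    refine Fin.cases ?_ ?_ j
    · simpa using hb
    · intro i; simpa using mul_nonneg ha (hq0 i)
  · rw [Fin.sum_cons, ← Finset.mul_sum, hq1, mul_one, add_comm, hab]
  · intro j; refine Fin.cases (by simpa using hv) (fun i => by simpa using hvs1 i) j
  · intro j; refine Fin.cases (by simpa using hPv) (fun i => by simpa using hvs0 i) j
  · rw [Fin.sum_univ_succ, hsum, Finset.smul_sum, add_comm]
    simp only [Fin.cons_zero, Fin.cons_succ]
    congr 1
    refine Finset.sum_congr rfl fun j _ => ?_
    rw [smul_smul]
    push_cast
    ring_nf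

lemma vecMulVec_star_isHermitian {n : ℕ} (v : Fin n → ℂ) :
    (vecMulVec v (star v)).IsHermitian := by
  ext i j
  simp [Matrix.IsHermitian, conjTranspose_apply, vecMulVec_apply, mul_comm]

lemma vecMulVec_mulVec' {n : ℕ} (v x : Fin n → ℂ) :
    vecMulVec v (star v) *ᵥ x = (star v ⬝ᵥ x) • v := by
  ext i
  simp only [mulVec, dotProduct, vecMulVec_apply, Pi.smul_apply, Pi.star_apply, smul_eq_mul,
    Finset.sum_mul]
  exact Finset.sum_congr rfl fun j _ => by ring

lemma quadform_vecMulVec {n : ℕ} (v x : Fin n → ℂ) :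
    star x ⬝ᵥ (vecMulVec v (star v) *ᵥ x) = star (star v ⬝ᵥ x) * (star v ⬝ᵥ x) := by
  rw [vecMulVec_mulVec', dotProduct_smul]
  rw [show star x ⬝ᵥ v = star (star v ⬝ᵥ x) from by rw [star_dotProduct]]
  rw [smul_eq_mul]; ring

lemma trace_vecMulVec_star {n : ℕ} (v : Fin n → ℂ) :
    (vecMulVec v (star v)).trace = star v ⬝ᵥ v := by
  simp only [trace, diag, vecMulVec_apply, dotProduct, Pi.star_apply]
  exact Finset.sum_congr rfl fun j _ => by ring

lemma posSemidef_real_smul {n : ℕ} {M : Matrix (Fin n) (Fin n) ℂ} (hM : M.PosSemidef)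
    {c : ℝ} (hc : 0 ≤ c) : (((c:ℝ):ℂ) • M).PosSemidef := by
  rw [posSemidef_iff_dotProduct_mulVec]
  constructor
  · unfold Matrix.IsHermitian
    rw [conjTranspose_smul, hM.1.eq]
    simp [RCLike.star_def]
  · intro x
    rw [smul_mulVec, dotProduct_smul]
    exact mul_nonneg (by exact_mod_cast hc) (hM.dotProduct_mulVec_nonneg x)

lemma proj_sub_psd {n : ℕ} {u w : Fin n → ℂ}
    {α β : ℂ} (hαβ : Complex.normSq α + Complex.normSq β = 1) :
    (vecMulVec u (star u) + vecMulVec w (star w)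
      - vecMulVec (α • u + β • w) (star (α • u + β • w))).PosSemidef := by
  rw [posSemidef_iff_dotProduct_mulVec]
  constructor
  · exact ((vecMulVec_star_isHermitian u).add (vecMulVec_star_isHermitian w)).sub
      (vecMulVec_star_isHermitian _)
  · intro x
    rw [sub_mulVec, add_mulVec, dotProduct_sub, dotProduct_add,
      quadform_vecMulVec, quadform_vecMulVec, quadform_vecMulVec]
    set cu := star u ⬝ᵥ x with hcu
    set cw := star w ⬝ᵥ x with hcw
    have hv : star (α • u + β • w) ⬝ᵥ x = star α * cu + star β * cw := by
      rw [star_add, star_smul, star_smul, add_dotProduct, smul_dotProduct, smul_dotProduct]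
      simp [smul_eq_mul, hcu, hcw]
    rw [hv]
    have e1 : ∀ z : ℂ, star z * z = (Complex.normSq z : ℂ) := fun z => by
      rw [Complex.star_def, Complex.normSq_eq_conj_mul_self]
    rw [e1, e1, e1]
    rw [show ((Complex.normSq cu : ℂ) + (Complex.normSq cw : ℂ)
        - (Complex.normSq (star α * cu + star β * cw) : ℂ))
      = ((Complex.normSq cu + Complex.normSq cw
        - Complex.normSq (star α * cu + star β * cw) : ℝ) : ℂ) from by push_cast; ring]
    rw [Complex.zero_le_real]
    have habs : ‖star α * cu + star β * cw‖
        ≤ ‖α‖ * ‖cu‖ + ‖β‖ * ‖cw‖ := by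
      refine (norm_add_le _ _).trans ?_
      simp [norm_mul]
    have h1 : Complex.normSq (star α * cu + star β * cw)
        ≤ (‖α‖ * ‖cu‖ + ‖β‖ * ‖cw‖)^2 := by
      rw [← Complex.sq_norm]
      have h0 : (0:ℝ) ≤ ‖star α * cu + star β * cw‖ := norm_nonneg _
      nlinarith [habs]
    have hA : Complex.normSq α = (‖α‖)^2 := (Complex.sq_norm α).symm
    have hB : Complex.normSq β = (‖β‖)^2 := (Complex.sq_norm β).symm
    have hCu : Complex.normSq cu = (‖cu‖)^2 := (Complex.sq_norm cu).symm
    have hCw : Complex.normSq cw = (‖cw‖)^2 := (Complex.sq_norm cw).symm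
    rw [hA, hB] at hαβ
    rw [hCu, hCw]
    nlinarith [h1, sq_nonneg (‖α‖ * ‖cw‖ - ‖β‖ * ‖cu‖),
      norm_nonneg cu, norm_nonneg cw]

lemma unitary_diag_single {n : ℕ} (U : Matrix (Fin n) (Fin n) ℂ) (i : Fin n) :
    U * diagonal (Pi.single i (1:ℂ)) * Uᴴ
      = vecMulVec (fun a => U a i) (star (fun a => U a i)) := by
  ext a b
  rw [Matrix.mul_apply, vecMulVec_apply]
  rw [Finset.sum_eq_single i]
  · simp [Matrix.mul_diagonal, conjTranspose_apply]
  · intro k _ hk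
    simp [Matrix.mul_diagonal, Pi.single_apply, hk]
  · simp

lemma omega_sub_psd {n : ℕ} {ω : Matrix (Fin n) (Fin n) ℂ} (hω : ω.PosSemidef)
    {i j : Fin n} (hij : i ≠ j) {ε : ℝ}
    (hi : ε ≤ hω.1.eigenvalues i) (hj : ε ≤ hω.1.eigenvalues j) :
    (ω - (ε:ℂ) • (vecMulVec (⇑(hω.1.eigenvectorBasis i)) (star ⇑(hω.1.eigenvectorBasis i))
      + vecMulVec (⇑(hω.1.eigenvectorBasis j)) (star ⇑(hω.1.eigenvectorBasis j)))).PosSemidef := by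
  set U : Matrix (Fin n) (Fin n) ℂ := (hω.1.eigenvectorUnitary : Matrix (Fin n) (Fin n) ℂ) with hU
  have hcol : ∀ k : Fin n, (fun a => U a k) = ⇑(hω.1.eigenvectorBasis k) := by
    intro k; funext a; exact hω.1.eigenvectorUnitary_apply a k
  set g : Fin n → ℂ := fun k =>
    ((hω.1.eigenvalues k - (if k = i then ε else 0) - (if k = j then ε else 0) : ℝ) : ℂ) with hg
  have hdiag : diagonal (RCLike.ofReal ∘ hω.1.eigenvalues)
      - (ε:ℂ) • diagonal (Pi.single i (1:ℂ)) - (ε:ℂ) • diagonal (Pi.single j (1:ℂ))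
      = diagonal g := by
    ext a b
    by_cases hab : a = b
    · subst hab
      simp only [Matrix.sub_apply, Matrix.smul_apply, diagonal_apply_eq, Function.comp_apply, Pi.single_apply,
        smul_eq_mul, hg]
      push_cast
      by_cases h1 : a = i <;> by_cases h2 : a = j <;> simp [h1, h2, hij, Ne.symm hij]
    · simp [diagonal_apply_ne _ hab, hab]
  have key : ω - (ε:ℂ) • (vecMulVec (⇑(hω.1.eigenvectorBasis i)) (star ⇑(hω.1.eigenvectorBasis i))
      + vecMulVec (⇑(hω.1.eigenvectorBasis j)) (star ⇑(hω.1.eigenvectorBasis j)))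
      = U * diagonal g * Uᴴ := by
    rw [← hdiag]
    rw [Matrix.mul_sub, Matrix.mul_sub, Matrix.sub_mul, Matrix.sub_mul]
    rw [Matrix.mul_smul, Matrix.mul_smul, Matrix.smul_mul, Matrix.smul_mul]
    rw [unitary_diag_single, unitary_diag_single, hcol, hcol]
    have hspec : U * diagonal (RCLike.ofReal ∘ hω.1.eigenvalues) * Uᴴ = ω := by
      rw [← Matrix.star_eq_conjTranspose]
      exact hω.1.spectral_theorem.symm
    rw [hspec, smul_add, sub_sub]
  rw [key]
  apply Matrix.PosSemidef.mul_mul_conjTranspose_same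
  rw [posSemidef_diagonal_iff]
  intro k
  rw [hg]
  rw [Complex.zero_le_real]
  have hk := hω.eigenvalues_nonneg k
  by_cases h1 : k = i <;> by_cases h2 : k = j <;> simp [h1, h2, hij, Ne.symm hij] <;> linarith

end Aux

theorem stmt_13 {n : ℕ} (P : MvPolynomial (Fin n) ℂ) (D : ℕ) (hD : 1 ≤ D)
    (hP : P.IsHomogeneous D) (ρ : Matrix (Fin n) (Fin n) ℂ)
    (hρ : IsDensityMatrix ρ) (μ : ℝ) (ρL ω : Matrix (Fin n) (Fin n) ℂ)
    (hρL : ρL ∈ ZeroSet P) (hω : IsDensityMatrix ω)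
    (hμ0 : 0 ≤ μ) (hμ1 : μ < 1)
    (hdecomp : ρ = ((μ : ℝ) : ℂ) • ρL + ((1 - μ : ℝ) : ℂ) • ω)
    (hmax : ∀ (lam : ℝ) (ρL' ω' : Matrix (Fin n) (Fin n) ℂ),
      ρL' ∈ ZeroSet P → IsDensityMatrix ω' → 0 ≤ lam → lam ≤ 1 →
      ρ = ((lam : ℝ) : ℂ) • ρL' + ((1 - lam : ℝ) : ℂ) • ω' → lam ≤ μ) :
    ω.rank = 1 := by

  classical
  by_contra hrank
  -- sum of eigenvalues is 1
  have htrC : ω.trace = ∑ k, (hω.1.1.eigenvalues k : ℂ) := by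
    conv_lhs => rw [hω.1.1.spectral_theorem]
    rw [Unitary.conjStarAlgAut_apply]
    rw [Matrix.trace_mul_cycle]
    rw [show star ((hω.1.1.eigenvectorUnitary : Matrix (Fin n) (Fin n) ℂ))
        * ((hω.1.1.eigenvectorUnitary : Matrix (Fin n) (Fin n) ℂ)) = 1 from
      Unitary.coe_star_mul_self _]
    rw [Matrix.one_mul, Matrix.trace_diagonal]
    simp
  have htr : ∑ k, hω.1.1.eigenvalues k = 1 := by
    have h1 : (↑(∑ k, hω.1.1.eigenvalues k) : ℂ) = 1 := by
      push_cast
      rw [← htrC, hω.2]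
    exact_mod_cast h1
  -- there are two distinct nonzero eigenvalues
  have hcard : ω.rank = Fintype.card {k // hω.1.1.eigenvalues k ≠ 0} :=
    hω.1.1.rank_eq_card_non_zero_eigs
  have hpos : 0 < Fintype.card {k // hω.1.1.eigenvalues k ≠ 0} := by
    rw [Fintype.card_pos_iff]
    by_contra hne
    rw [not_nonempty_iff] at hne
    have hz : ∀ k, hω.1.1.eigenvalues k = 0 := fun k => by
      by_contra h; exact hne.false ⟨k, h⟩
    rw [Finset.sum_eq_zero (fun k _ => hz k)] at htr
    norm_num at htr
  have h2le : 1 < Fintype.card {k // hω.1.1.eigenvalues k ≠ 0} := by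
    rw [hcard] at hrank
    omega
  obtain ⟨⟨i, hi⟩, ⟨j, hj⟩, hijne⟩ := Fintype.one_lt_card_iff.mp h2le
  have hij : i ≠ j := fun h => hijne (Subtype.ext h)
  have hlami : 0 < hω.1.1.eigenvalues i :=
    lt_of_le_of_ne (hω.1.eigenvalues_nonneg i) (Ne.symm hi)
  have hlamj : 0 < hω.1.1.eigenvalues j :=
    lt_of_le_of_ne (hω.1.eigenvalues_nonneg j) (Ne.symm hj)
  set u : Fin n → ℂ := ⇑(hω.1.1.eigenvectorBasis i) with hu
  set w : Fin n → ℂ := ⇑(hω.1.1.eigenvectorBasis j) with hw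
  -- orthonormality
  have horth := hω.1.1.eigenvectorBasis.orthonormal
  rw [orthonormal_iff_ite] at horth
  have huu : star u ⬝ᵥ u = 1 := by
    have h := horth i i
    rw [EuclideanSpace.inner_eq_star_dotProduct] at h
    rw [dotProduct_comm]
    simpa using h
  have hww : star w ⬝ᵥ w = 1 := by
    have h := horth j j
    rw [EuclideanSpace.inner_eq_star_dotProduct] at h
    rw [dotProduct_comm]
    simpa using h
  have huw : star u ⬝ᵥ w = 0 := by
    have h := horth i j
    rw [EuclideanSpace.inner_eq_star_dotProduct] at h
    rw [dotProduct_comm]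
    simpa [hij] using h
  have hwu : star w ⬝ᵥ u = 0 := by
    have h := horth j i
    rw [EuclideanSpace.inner_eq_star_dotProduct] at h
    rw [dotProduct_comm]
    simpa [Ne.symm hij] using h
  -- find a zero of P in the span of u, w
  obtain ⟨a, b, habne, hz⟩ := exists_zero_combo hD hP u w
  set N : ℝ := Real.sqrt (Complex.normSq a + Complex.normSq b) with hN
  have hsumpos : 0 < Complex.normSq a + Complex.normSq b := by
    rw [not_and_or] at habne
    rcases habne with h | h
    · have := Complex.normSq_pos.mpr h
      have := Complex.normSq_nonneg b
      linarith
    · have := Complex.normSq_pos.mpr h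
      have := Complex.normSq_nonneg a
      linarith
  have hNpos : 0 < N := Real.sqrt_pos.mpr hsumpos
  have hNsq : N ^ 2 = Complex.normSq a + Complex.normSq b := Real.sq_sqrt hsumpos.le
  set α : ℂ := a / (N : ℂ) with hα
  set β : ℂ := b / (N : ℂ) with hβ
  have hNC : ((N:ℝ):ℂ) ≠ 0 := by exact_mod_cast hNpos.ne'
  have hαβ : Complex.normSq α + Complex.normSq β = 1 := by
    rw [hα, hβ, Complex.normSq_div, Complex.normSq_div, Complex.normSq_ofReal]
    rw [← add_div]
    rw [show N * N = Complex.normSq a + Complex.normSq b from by rw [← hNsq]; ring]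
    exact div_self hsumpos.ne'
  set v : Fin n → ℂ := α • u + β • w with hv
  have hunit : star v ⬝ᵥ v = 1 := by
    rw [hv]
    rw [star_add, star_smul, star_smul, add_dotProduct, smul_dotProduct, smul_dotProduct,
      dotProduct_add, dotProduct_add, dotProduct_smul, dotProduct_smul, dotProduct_smul,
      dotProduct_smul, huu, hww, huw, hwu]
    simp only [smul_eq_mul, mul_zero, mul_one, add_zero, zero_add]
    simp only [Complex.star_def]
    rw [← Complex.normSq_eq_conj_mul_self, ← Complex.normSq_eq_conj_mul_self]
    exact_mod_cast hαβ
  have hPv : MvPolynomial.eval v P = 0 := by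
    have hveq : v = fun k => ((N:ℂ))⁻¹ * (a * u k + b * w k) := by
      funext k
      rw [hv]
      simp only [Pi.add_apply, Pi.smul_apply, smul_eq_mul, hα, hβ]
      field_simp
    rw [hveq, homog_eval_smul hP, hz, mul_zero]
  -- the rank-one projection onto v
  set V : Matrix (Fin n) (Fin n) ℂ := vecMulVec v (star v) with hV
  set ε : ℝ := min (hω.1.1.eigenvalues i) (hω.1.1.eigenvalues j) with hεdef
  have hε0 : 0 < ε := lt_min hlami hlamj
  have hsumle : hω.1.1.eigenvalues i + hω.1.1.eigenvalues j ≤ 1 := by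
    rw [← htr]
    have hsub := Finset.sum_le_sum_of_subset_of_nonneg
      (Finset.subset_univ ({i, j} : Finset (Fin n)))
      (fun k _ _ => hω.1.eigenvalues_nonneg k)
    rwa [Finset.sum_pair hij] at hsub
  have hε1 : ε < 1 := by
    have h2 : ε + ε ≤ 1 := le_trans (add_le_add (min_le_left _ _) (min_le_right _ _)) hsumle
    linarith
  -- ω - ε V is PSD
  have hstep1 := omega_sub_psd hω.1 hij (min_le_left _ _) (min_le_right _ _)
  have hstep2 := proj_sub_psd (u := u) (w := w) hαβ
  have hstep2' := posSemidef_real_smul hstep2 hε0.le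
  have hsplit : ω - (ε:ℂ) • V
      = (ω - (ε:ℂ) • (vecMulVec u (star u) + vecMulVec w (star w)))
        + (ε:ℂ) • (vecMulVec u (star u) + vecMulVec w (star w) - V) := by
    rw [smul_sub]; abel
  have hsubpsd : (ω - (ε:ℂ) • V).PosSemidef := by
    rw [hsplit]
    exact hstep1.add hstep2'
  -- the residual density matrix
  set ω' : Matrix (Fin n) (Fin n) ℂ := (((1 - ε)⁻¹ : ℝ) : ℂ) • (ω - (ε:ℂ) • V) with hω'def
  have h1ε : (0:ℝ) < 1 - ε := by linarith
  have h1εC : ((1 - ε : ℝ) : ℂ) ≠ 0 := by exact_mod_cast h1ε.ne'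
  have hω'dm : IsDensityMatrix ω' := by
    constructor
    · exact posSemidef_real_smul hsubpsd (inv_nonneg.mpr h1ε.le)
    · rw [hω'def, Matrix.trace_smul, Matrix.trace_sub, Matrix.trace_smul, hV,
        trace_vecMulVec_star, hunit, hω.2]
      push_cast
      rw [smul_eq_mul, smul_eq_mul]
      field_simp
      rw [div_self (by exact_mod_cast h1ε.ne' : (1 - (ε:ℂ)) ≠ 0)]
  -- the improved decomposition
  set s : ℝ := μ + (1 - μ) * ε with hsdef
  have hspos : 0 < s := by
    have := mul_pos (show (0:ℝ) < 1 - μ by linarith) hε0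
    rw [hsdef]; linarith
  have hs1 : s ≤ 1 := by
    rw [hsdef]; nlinarith
  have hμs : μ < s := by
    have := mul_pos (show (0:ℝ) < 1 - μ by linarith) hε0
    rw [hsdef]; linarith
  have hsC : ((s:ℝ):ℂ) ≠ 0 := by exact_mod_cast hspos.ne'
  set ρL' : Matrix (Fin n) (Fin n) ℂ :=
    ((μ / s : ℝ) : ℂ) • ρL + (((1 - μ) * ε / s : ℝ) : ℂ) • V with hρL'def
  have hmem : ρL' ∈ ZeroSet P := by
    rw [hρL'def, hV]
    exact zeroSet_combo hρL hunit hPv (div_nonneg hμ0 hspos.le)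
      (div_nonneg (mul_nonneg (by linarith) hε0.le) hspos.le)
      (by rw [← add_div, hsdef, div_self hspos.ne'])
  -- coefficient identities
  have hc1 : ((s:ℝ):ℂ) * ((μ / s : ℝ) : ℂ) = ((μ:ℝ):ℂ) := by
    push_cast
    field_simp
  have hc2 : ((s:ℝ):ℂ) * (((1 - μ) * ε / s : ℝ) : ℂ) = (((1 - μ) * ε : ℝ) : ℂ) := by
    push_cast
    field_simp
  have hc3 : ((1 - s : ℝ) : ℂ) * (((1 - ε)⁻¹ : ℝ) : ℂ) = ((1 - μ : ℝ) : ℂ) := by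
    have h1s : (1 - s : ℝ) = (1 - μ) * (1 - ε) := by rw [hsdef]; ring
    rw [h1s]
    push_cast
    field_simp
    rw [mul_div_assoc, div_self (by exact_mod_cast h1ε.ne' : (1 - (ε:ℂ)) ≠ 0), mul_one]
  have hc4 : ((1 - μ : ℝ) : ℂ) * ((ε:ℝ):ℂ) = (((1 - μ) * ε : ℝ) : ℂ) := by
    push_cast; ring
  have keyeq : ρ = ((s : ℝ) : ℂ) • ρL' + ((1 - s : ℝ) : ℂ) • ω' := by
    rw [hdecomp, hρL'def, hω'def]
    rw [smul_add, smul_smul, smul_smul, smul_smul, hc1, hc2, hc3]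
    rw [smul_sub, smul_smul, hc4]
    abel
  have hle := hmax s ρL' ω' hmem hω'dm hspos.le hs1 keyeq
  linarith
end
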